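/- Let ω ⊆ ℝ be a Borel set. Then liminf_{A→+∞} ∫₀^{2π} 1_ω(A·sin t) dt > 0 (where A ranges over positive reals) if and only if ω is weakly thick, i.e. liminf_{x→+∞} |ω ∩ [−x, x]| / (2x) > 0, where |·| denotes one-dimensional Lebesgue measure. -/

import Mathlib

open MeasureTheory Filter


lemma lipOn_vol {K : NNReal} {f : ℝ → ℝ} {s : Set ℝ} (h : LipschitzOnWith K f s) :
    volume (f '' s) ≤ (K : ENNReal) * volume s := by
  have h1 := h.hausdorffMeasure_image_le (zero_le_one (α := ℝ))
  rwa [MeasureTheory.hausdorffMeasure_real, ENNReal.rpow_one] at h1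

lemma lip_g {A : ℝ} (hA : 0 < A) : LipschitzWith A.toNNReal (fun t => A * Real.sin t) := by
  rw [← lipschitzOnWith_univ]
  apply convex_univ.lipschitzOnWith_of_nnnorm_hasDerivWithin_le
    (f' := fun t => A * Real.cos t)
  · intro x _
    exact ((Real.hasDerivAt_sin x).const_mul A).hasDerivWithinAt
  · intro x _
    rw [← NNReal.coe_le_coe, coe_nnnorm, Real.norm_eq_abs, abs_mul, abs_of_pos hA,
      Real.coe_toNNReal _ hA.le]
    nlinarith [Real.abs_cos_le_one x, abs_nonneg (Real.cos x)]

lemma key_exp {A : ℝ} (hA : 0 < A) (f : ℝ → ℝ) (X : Set ℝ)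
    (hfg : ∀ s ∈ X, A * Real.sin (f s) = s) :
    volume X ≤ ENNReal.ofReal A * volume (f '' X) := by
  have h1 : (fun t => A * Real.sin t) '' (f '' X) = X := by
    rw [Set.image_image, Set.image_congr hfg, Set.image_id']
  calc volume X = volume ((fun t => A * Real.sin t) '' (f '' X)) := by rw [h1]
    _ ≤ (A.toNNReal : ENNReal) * volume (f '' X) := by
        have hl : LipschitzOnWith A.toNNReal (fun t => A * Real.sin t) (f '' X) :=
          (lip_g hA).lipschitzOnWith
        exact lipOn_vol hl
    _ = ENNReal.ofReal A * volume (f '' X) := rfl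

lemma vol_lower {ω : Set ℝ} (hω : MeasurableSet ω) {A : ℝ} (hA : 0 < A) :
    volume (ω ∩ Set.Icc (-A) A) ≤ ENNReal.ofReal A *
      volume ((fun t => A * Real.sin t) ⁻¹' ω ∩ Set.Ioc 0 (2 * Real.pi)) := by
  have hpi := Real.pi_pos
  set S := (fun t => A * Real.sin t) ⁻¹' ω ∩ Set.Ioc 0 (2 * Real.pi) with hS
  have hSm : MeasurableSet S :=
    ((measurable_const.mul Real.measurable_sin) hω).inter measurableSet_Ioc
  set X₁ := ω ∩ Set.Ioc 0 A with hX₁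
  set X₂ := ω ∩ Set.Ico (-A) 0 with hX₂
  -- branch maps
  have hf₁ : ∀ s ∈ X₁, A * Real.sin (Real.arcsin (s / A)) = s := by
    intro s hs
    have h0 : 0 < s / A := div_pos hs.2.1 hA
    rw [Real.sin_arcsin (by linarith) (by rw [div_le_one hA]; exact hs.2.2)]
    field_simp
  have hf₂ : ∀ s ∈ X₂, A * Real.sin (Real.pi - Real.arcsin (s / A)) = s := by
    intro s hs
    have h0 : s / A < 0 := div_neg_of_neg_of_pos hs.2.2 hA
    rw [Real.sin_pi_sub,
      Real.sin_arcsin (by rw [neg_le, ← neg_div, div_le_one hA]; linarith [hs.2.1]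
        : (-1:ℝ) ≤ s / A) (by linarith : s / A ≤ 1)]
    field_simp
  have him₁ : (fun s => Real.arcsin (s / A)) '' X₁ ⊆ S ∩ Set.Ioc 0 (Real.pi / 2) := by
    rintro t ⟨s, hs, rfl⟩
    have ht1 : 0 < Real.arcsin (s / A) := Real.arcsin_pos.2 (div_pos hs.2.1 hA)
    have ht2 := Real.arcsin_le_pi_div_two (s / A)
    refine ⟨⟨?_, ht1, by linarith⟩, ht1, ht2⟩
    simp only [Set.mem_preimage, hf₁ s hs]
    exact hs.1
  have him₂ : (fun s => Real.pi - Real.arcsin (s / A)) '' X₂ ⊆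
      S ∩ Set.Ioc Real.pi (3 * Real.pi / 2) := by
    rintro t ⟨s, hs, rfl⟩
    have ht1 : Real.arcsin (s / A) < 0 :=
      Real.arcsin_lt_zero.2 (div_neg_of_neg_of_pos hs.2.2 hA)
    have ht2 := Real.neg_pi_div_two_le_arcsin (s / A)
    refine ⟨⟨?_, by linarith, by linarith⟩, by linarith, by linarith⟩
    simp only [Set.mem_preimage, hf₂ s hs]
    exact hs.1
  have hb₁ : volume X₁ ≤ ENNReal.ofReal A * volume (S ∩ Set.Ioc 0 (Real.pi / 2)) :=
    (key_exp hA _ _ hf₁).trans (mul_le_mul_right (measure_mono him₁) _)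
  have hb₂ : volume X₂ ≤ ENNReal.ofReal A * volume (S ∩ Set.Ioc Real.pi (3 * Real.pi / 2)) :=
    (key_exp hA _ _ hf₂).trans (mul_le_mul_right (measure_mono him₂) _)
  have hsub : ω ∩ Set.Icc (-A) A ⊆ X₂ ∪ X₁ ∪ {(0:ℝ)} := by
    rintro s ⟨hsω, hs1, hs2⟩
    rcases lt_trichotomy s 0 with h | h | h
    · exact Or.inl (Or.inl ⟨hsω, hs1, h⟩)
    · exact Or.inr h
    · exact Or.inl (Or.inr ⟨hsω, h, hs2⟩)
  calc volume (ω ∩ Set.Icc (-A) A) ≤ volume (X₂ ∪ X₁ ∪ {(0:ℝ)}) := measure_mono hsub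
    _ ≤ volume (X₂ ∪ X₁) + volume ({(0:ℝ)} : Set ℝ) := measure_union_le _ _
    _ = volume (X₂ ∪ X₁) := by rw [Real.volume_singleton, add_zero]
    _ ≤ volume X₂ + volume X₁ := measure_union_le _ _
    _ ≤ ENNReal.ofReal A * volume (S ∩ Set.Ioc Real.pi (3 * Real.pi / 2))
        + ENNReal.ofReal A * volume (S ∩ Set.Ioc 0 (Real.pi / 2)) := add_le_add hb₂ hb₁
    _ = ENNReal.ofReal A * (volume (S ∩ Set.Ioc Real.pi (3 * Real.pi / 2))
        + volume (S ∩ Set.Ioc 0 (Real.pi / 2))) := (mul_add _ _ _).symm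
    _ ≤ ENNReal.ofReal A * volume S := by
        apply mul_le_mul_right
        rw [← measure_union ?_ (hSm.inter measurableSet_Ioc)]
        · exact measure_mono (by intro t ht; rcases ht with h | h <;> exact h.1)
        · apply Set.disjoint_left.2
          rintro t ⟨-, ht1, -⟩ ⟨-, -, ht2⟩
          linarith

lemma lip_f1 {A c : ℝ} (hA : 0 < A) (hc0 : 0 ≤ c) (hc1 : c < 1) :
    LipschitzOnWith (1 / (A * Real.sqrt (1 - c ^ 2))).toNNReal
      (fun s => Real.arcsin (s / A)) (Set.Icc (-(A * c)) (A * c)) := by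
  have hb : (0:ℝ) < Real.sqrt (1 - c ^ 2) := Real.sqrt_pos.2 (by nlinarith)
  apply (convex_Icc _ _).lipschitzOnWith_of_nnnorm_hasDerivWithin_le
    (f' := fun s => 1 / Real.sqrt (1 - (s / A) ^ 2) * (1 / A))
  · intro x hx
    simp only [Set.mem_Icc] at hx
    have h1 : -c ≤ x / A := by rw [neg_le, ← neg_div, div_le_iff₀ hA]; linarith [hx.1]
    have h2 : x / A ≤ c := by rw [div_le_iff₀ hA]; linarith [hx.2]
    have harc : HasDerivAt (fun s : ℝ => Real.arcsin (s / A))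
        (1 / Real.sqrt (1 - (x / A) ^ 2) * (1 / A)) x := by
      have hd : HasDerivAt (fun s : ℝ => s / A) (1 / A) x := by
        simpa using (hasDerivAt_id x).div_const A
      exact (Real.hasDerivAt_arcsin (by nlinarith) (by nlinarith)).comp x hd
    exact harc.hasDerivWithinAt
  · intro x hx
    simp only [Set.mem_Icc] at hx
    have h1 : -c ≤ x / A := by rw [neg_le, ← neg_div, div_le_iff₀ hA]; linarith [hx.1]
    have h2 : x / A ≤ c := by rw [div_le_iff₀ hA]; linarith [hx.2]
    have hsq : (x / A) ^ 2 ≤ c ^ 2 := sq_le_sq' h1 h2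
    have hle : Real.sqrt (1 - c ^ 2) ≤ Real.sqrt (1 - (x / A) ^ 2) :=
      Real.sqrt_le_sqrt (by linarith)
    have hx0 : (0:ℝ) < Real.sqrt (1 - (x / A) ^ 2) := lt_of_lt_of_le hb hle
    have hnn : (0:ℝ) ≤ 1 / Real.sqrt (1 - (x / A) ^ 2) * (1 / A) := by positivity
    rw [← NNReal.coe_le_coe, coe_nnnorm, Real.norm_eq_abs, abs_of_nonneg hnn,
      Real.coe_toNNReal _ (by positivity)]
    rw [div_mul_div_comm, one_mul]
    apply one_div_le_one_div_of_le (by positivity)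
    calc A * Real.sqrt (1 - c ^ 2) = Real.sqrt (1 - c ^ 2) * A := mul_comm _ _
      _ ≤ Real.sqrt (1 - (x / A) ^ 2) * A := by nlinarith

lemma vol_upper {ω : Set ℝ} (hω : MeasurableSet ω) {A δ : ℝ} (hA : 0 < A) (hδ : 0 < δ)
    (hδ2 : δ < Real.pi / 2) :
    volume ((fun t => A * Real.sin t) ⁻¹' ω ∩ Set.Ioc 0 (2 * Real.pi)) ≤
      ENNReal.ofReal (4 * δ) +
        3 * (ENNReal.ofReal (1 / (A * Real.sin δ)) * volume (ω ∩ Set.Icc (-A) A)) := by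
  have hpi := Real.pi_pos
  set c : ℝ := Real.cos δ with hc
  have hc0 : 0 ≤ c := Real.cos_nonneg_of_neg_pi_div_two_le_of_le (by linarith) hδ2.le
  have hc1 : c < 1 := by
    have := Real.cos_lt_cos_of_nonneg_of_le_pi (le_refl (0:ℝ)) (by linarith) hδ
    rwa [Real.cos_zero] at this
  have hsinδ : Real.sin δ = Real.sqrt (1 - c ^ 2) := by
    rw [hc, ← Real.sin_eq_sqrt_one_sub_cos_sq hδ.le (by linarith)]
  have hsδ : 0 < Real.sin δ := Real.sin_pos_of_pos_of_lt_pi hδ (by linarith)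
  set κ : NNReal := (1 / (A * Real.sin δ)).toNNReal with hκ
  set W : Set ℝ := ω ∩ Set.Icc (-(A * c)) (A * c) with hW
  have hWsub : W ⊆ Set.Icc (-(A * c)) (A * c) := Set.inter_subset_right
  have hl1 : LipschitzOnWith κ (fun s => Real.arcsin (s / A)) W := by
    rw [hκ, hsinδ]
    exact (lip_f1 hA hc0 hc1).mono hWsub
  have hlaff : ∀ a e : ℝ, e = 1 ∨ e = -1 → LipschitzWith 1 (fun y : ℝ => a + e * y) := by
    intro a e he
    apply LipschitzWith.of_dist_le_mul
    intro x y
    rw [NNReal.coe_one, one_mul, Real.dist_eq, Real.dist_eq]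
    have h1 : a + e * x - (a + e * y) = e * (x - y) := by ring
    rw [h1, abs_mul]
    rcases he with h | h <;> simp [h]
  have hl2 : LipschitzOnWith κ (fun s => Real.pi - Real.arcsin (s / A)) W := by
    have := (hlaff Real.pi (-1) (Or.inr rfl)).comp_lipschitzOnWith hl1
    rw [one_mul] at this
    convert this using 1
    funext s
    simp only [Function.comp_apply]
    ring
  have hl3 : LipschitzOnWith κ (fun s => 2 * Real.pi + Real.arcsin (s / A)) W := by
    have := (hlaff (2 * Real.pi) 1 (Or.inl rfl)).comp_lipschitzOnWith hl1
    rw [one_mul] at this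
    convert this using 1
    funext s
    simp only [Function.comp_apply]
    ring
  -- covering
  set S := (fun t => A * Real.sin t) ⁻¹' ω ∩ Set.Ioc 0 (2 * Real.pi) with hS
  have hcover : S ⊆ (Set.Icc (Real.pi / 2 - δ) (Real.pi / 2 + δ) ∪
      Set.Icc (3 * Real.pi / 2 - δ) (3 * Real.pi / 2 + δ)) ∪
      ((fun s => Real.arcsin (s / A)) '' W ∪
        ((fun s => Real.pi - Real.arcsin (s / A)) '' W ∪
          (fun s => 2 * Real.pi + Real.arcsin (s / A)) '' W)) := by
    rintro t ⟨htω, ht0, ht2π⟩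
    by_cases hbad : t ∈ Set.Icc (Real.pi / 2 - δ) (Real.pi / 2 + δ) ∪
        Set.Icc (3 * Real.pi / 2 - δ) (3 * Real.pi / 2 + δ)
    · exact Or.inl hbad
    right
    simp only [Set.mem_union, Set.mem_Icc, not_or, not_and, not_le] at hbad
    have hb1 : t < Real.pi / 2 - δ ∨ Real.pi / 2 + δ < t := by
      rcases lt_or_ge t (Real.pi / 2 - δ) with h | h
      · exact Or.inl h
      · exact Or.inr (hbad.1 h)
    have hb2 : t < 3 * Real.pi / 2 - δ ∨ 3 * Real.pi / 2 + δ < t := by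
      rcases lt_or_ge t (3 * Real.pi / 2 - δ) with h | h
      · exact Or.inl h
      · exact Or.inr (hbad.2 h)
    have hmemW : ∀ u : ℝ, Real.sin u = Real.sin t → -c ≤ Real.sin u → Real.sin u ≤ c →
        A * Real.sin t ∈ W := by
      intro u hu h1 h2
      rw [← hu]
      refine ⟨by rw [hu]; exact htω, by nlinarith, by nlinarith⟩
    rcases hb1 with hb1 | hb1
    · -- t ∈ (0, π/2 - δ)
      left
      have hst : Real.sin t ≤ c := by
        rw [hc, ← Real.sin_pi_div_two_sub]
        exact Real.sin_le_sin_of_le_of_le_pi_div_two (by linarith) (by linarith) (by linarith)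
      have hst0 : 0 < Real.sin t := Real.sin_pos_of_pos_of_lt_pi ht0 (by linarith)
      refine ⟨A * Real.sin t, hmemW t rfl (by linarith) hst, ?_⟩
      show Real.arcsin (A * Real.sin t / A) = t
      rw [mul_div_cancel_left₀ _ hA.ne', Real.arcsin_sin (by linarith) (by linarith)]
    · rcases hb2 with hb2 | hb2
      · -- t ∈ (π/2 + δ, 3π/2 - δ) : use u = π - t
        right; left
        have hsin : Real.sin (Real.pi - t) = Real.sin t := Real.sin_pi_sub t
        have h1 : Real.sin (Real.pi - t) ≤ c := by
          rw [hc, ← Real.sin_pi_div_two_sub]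
          exact Real.sin_le_sin_of_le_of_le_pi_div_two (by linarith) (by linarith) (by linarith)
        have h2 : -c ≤ Real.sin (Real.pi - t) := by
          rw [hc, ← Real.sin_pi_div_two_sub, ← Real.sin_neg]
          exact Real.sin_le_sin_of_le_of_le_pi_div_two (by linarith) (by linarith) (by linarith)
        refine ⟨A * Real.sin t, hmemW (Real.pi - t) hsin (hsin ▸ h2) (hsin ▸ h1), ?_⟩
        show Real.pi - Real.arcsin (A * Real.sin t / A) = t
        rw [mul_div_cancel_left₀ _ hA.ne', ← hsin,
          Real.arcsin_sin (by linarith) (by linarith)]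
        ring
      · -- t ∈ (3π/2 + δ, 2π] : use u = t - 2π
        right; right
        have hsin : Real.sin (t - 2 * Real.pi) = Real.sin t := Real.sin_periodic.sub_eq t
        have h1 : Real.sin (t - 2 * Real.pi) ≤ c :=
          le_trans (Real.sin_nonpos_of_nonpos_of_neg_pi_le (by linarith) (by linarith)) hc0
        have h2 : -c ≤ Real.sin (t - 2 * Real.pi) := by
          rw [hc, ← Real.sin_pi_div_two_sub, ← Real.sin_neg]
          exact Real.sin_le_sin_of_le_of_le_pi_div_two (by linarith) (by linarith) (by linarith)
        refine ⟨A * Real.sin t, hmemW (t - 2 * Real.pi) hsin (hsin ▸ h2) (hsin ▸ h1), ?_⟩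
        show 2 * Real.pi + Real.arcsin (A * Real.sin t / A) = t
        rw [mul_div_cancel_left₀ _ hA.ne', ← hsin,
          Real.arcsin_sin (by linarith) (by linarith)]
        ring
  have hWvol : volume W ≤ volume (ω ∩ Set.Icc (-A) A) := by
    apply measure_mono
    apply Set.inter_subset_inter_right
    apply Set.Icc_subset_Icc (by nlinarith) (by nlinarith)
  have himv : ∀ f : ℝ → ℝ, LipschitzOnWith κ f W →
      volume (f '' W) ≤ ENNReal.ofReal (1 / (A * Real.sin δ)) * volume (ω ∩ Set.Icc (-A) A) := by
    intro f hf
    refine (lipOn_vol hf).trans ?_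
    exact mul_le_mul' (le_refl _) hWvol
  have hbadvol : volume (Set.Icc (Real.pi / 2 - δ) (Real.pi / 2 + δ) ∪
      Set.Icc (3 * Real.pi / 2 - δ) (3 * Real.pi / 2 + δ)) ≤ ENNReal.ofReal (4 * δ) := by
    refine (measure_union_le _ _).trans ?_
    rw [Real.volume_Icc, Real.volume_Icc]
    rw [← ENNReal.ofReal_add (by linarith) (by linarith)]
    apply ENNReal.ofReal_le_ofReal
    ring_nf
    linarith
  calc volume S ≤ _ := measure_mono hcover
    _ ≤ volume (Set.Icc (Real.pi / 2 - δ) (Real.pi / 2 + δ) ∪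
          Set.Icc (3 * Real.pi / 2 - δ) (3 * Real.pi / 2 + δ)) +
        (volume ((fun s => Real.arcsin (s / A)) '' W) +
          (volume ((fun s => Real.pi - Real.arcsin (s / A)) '' W) +
            volume ((fun s => 2 * Real.pi + Real.arcsin (s / A)) '' W))) := by
        refine (measure_union_le _ _).trans ?_
        gcongr
        refine (measure_union_le _ _).trans ?_
        gcongr
        exact measure_union_le _ _
    _ ≤ ENNReal.ofReal (4 * δ) +
        (ENNReal.ofReal (1 / (A * Real.sin δ)) * volume (ω ∩ Set.Icc (-A) A) +
          (ENNReal.ofReal (1 / (A * Real.sin δ)) * volume (ω ∩ Set.Icc (-A) A) +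
            ENNReal.ofReal (1 / (A * Real.sin δ)) * volume (ω ∩ Set.Icc (-A) A))) :=
        add_le_add hbadvol (add_le_add (himv _ hl1) (add_le_add (himv _ hl2) (himv _ hl3)))
    _ = ENNReal.ofReal (4 * δ) +
        3 * (ENNReal.ofReal (1 / (A * Real.sin δ)) * volume (ω ∩ Set.Icc (-A) A)) := by
        ring


lemma integral_eq_vol {ω : Set ℝ} (hω : MeasurableSet ω) (A : ℝ) :
    (∫ t in (0 : ℝ)..(2 * Real.pi), Set.indicator ω (fun _ => (1 : ℝ)) (A * Real.sin t))
      = (volume ((fun t => A * Real.sin t) ⁻¹' ω ∩ Set.Ioc 0 (2 * Real.pi))).toReal := by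
  have hm : MeasurableSet ((fun t => A * Real.sin t) ⁻¹' ω) :=
    (measurable_const.mul Real.measurable_sin) hω
  rw [intervalIntegral.integral_of_le (by positivity)]
  have : ∀ t : ℝ, Set.indicator ω (fun _ => (1:ℝ)) (A * Real.sin t)
      = Set.indicator ((fun t => A * Real.sin t) ⁻¹' ω) (fun _ => (1:ℝ)) t := by
    intro t
    by_cases h : A * Real.sin t ∈ ω <;>
      simp [Set.indicator_apply, h, Set.mem_preimage]
  simp_rw [this]
  rw [MeasureTheory.setIntegral_indicator hm, setIntegral_const, smul_eq_mul, mul_one,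
    Set.inter_comm]
  rfl

/-- For the one-dimensional harmonic oscillator, the classical observability constant
`𝔎^∞ = liminf_{A→∞} ∫₀^{2π} 1_ω(A sin t) dt` is positive if and only if `ω` is weakly
thick, i.e. `liminf_{x→∞} |ω ∩ [-x,x]|/(2x) > 0`. -/
theorem stmt_8 (ω : Set ℝ) (hω : MeasurableSet ω) :
    (0 < liminf
      (fun A : ℝ => ∫ t in (0 : ℝ)..(2 * Real.pi),
        Set.indicator ω (fun _ => (1 : ℝ)) (A * Real.sin t)) atTop)
    ↔ 0 < liminf
      (fun x : ℝ => (volume (ω ∩ Set.Icc (-x) x)).toReal / (2 * x)) atTop := by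
  have hpi := Real.pi_pos
  set I : ℝ → ℝ := fun A =>
    (volume ((fun t => A * Real.sin t) ⁻¹' ω ∩ Set.Ioc 0 (2 * Real.pi))).toReal with hI
  set d : ℝ → ℝ := fun x => (volume (ω ∩ Set.Icc (-x) x)).toReal / (2 * x) with hd
  have hIeq : (fun A : ℝ => ∫ t in (0 : ℝ)..(2 * Real.pi),
      Set.indicator ω (fun _ => (1 : ℝ)) (A * Real.sin t)) = I := by
    funext A; exact integral_eq_vol hω A
  rw [hIeq]
  -- finiteness facts
  have hfinIcc : ∀ A : ℝ, volume (ω ∩ Set.Icc (-A) A) ≠ ⊤ := by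
    intro A
    exact ne_top_of_le_ne_top (by rw [Real.volume_Icc]; exact ENNReal.ofReal_ne_top)
      (measure_mono Set.inter_subset_right)
  have hfinS : ∀ A : ℝ, volume ((fun t => A * Real.sin t) ⁻¹' ω ∩ Set.Ioc 0 (2 * Real.pi)) ≠ ⊤ := by
    intro A
    exact ne_top_of_le_ne_top (by rw [Real.volume_Ioc]; exact ENNReal.ofReal_ne_top)
      (measure_mono Set.inter_subset_right)
  have hInn : ∀ A : ℝ, 0 ≤ I A := fun A => ENNReal.toReal_nonneg
  have hIbd : IsBoundedUnder (· ≥ ·) atTop I :=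
    ⟨0, eventually_map.2 (Eventually.of_forall hInn)⟩
  have hdbd1 : ∀ᶠ A : ℝ in atTop, d A ≤ 1 := by
    filter_upwards [eventually_gt_atTop (0:ℝ)] with A hA
    have h1 : (volume (ω ∩ Set.Icc (-A) A)).toReal ≤ 2 * A := by
      apply ENNReal.toReal_le_of_le_ofReal (by linarith)
      calc volume (ω ∩ Set.Icc (-A) A) ≤ volume (Set.Icc (-A) A) :=
            measure_mono Set.inter_subset_right
        _ = ENNReal.ofReal (2 * A) := by rw [Real.volume_Icc]; ring_nf
    rw [hd, div_le_one (by linarith)]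
    exact h1
  have hdcobd : IsCoboundedUnder (· ≥ ·) atTop d :=
    IsBoundedUnder.isCoboundedUnder_ge ⟨1, eventually_map.2 hdbd1⟩
  -- pointwise comparison (easy direction): d A ≤ I A for A > 0
  have hdI : ∀ A : ℝ, 0 < A → d A ≤ I A := by
    intro A hA
    have h := vol_lower hω hA
    have h2 : (volume (ω ∩ Set.Icc (-A) A)).toReal ≤ A * I A := by
      have hne : ENNReal.ofReal A *
          volume ((fun t => A * Real.sin t) ⁻¹' ω ∩ Set.Ioc 0 (2 * Real.pi)) ≠ ⊤ :=
        ENNReal.mul_ne_top ENNReal.ofReal_ne_top (hfinS A)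
      have := ENNReal.toReal_mono hne h
      rwa [ENNReal.toReal_mul, ENNReal.toReal_ofReal hA.le] at this
    rw [hd, div_le_iff₀ (by linarith)]
    nlinarith [hInn A]
  constructor
  · -- hard direction
    intro hIpos
    by_contra hdpos
    have hdle : liminf d atTop ≤ 0 := not_lt.1 hdpos
    have hkey : ∀ ε : ℝ, 0 < ε → liminf I atTop ≤ ε := by
      intro ε hε
      set δ : ℝ := min (ε / 8) 1 with hδdef
      have hδ0 : 0 < δ := lt_min (by linarith) one_pos
      have hδε : δ ≤ ε / 8 := min_le_left _ _
      have hδ1 : δ ≤ 1 := min_le_right _ _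
      have hδπ : δ < Real.pi / 2 := by
        have := Real.pi_gt_three; linarith
      have hsδ : 0 < Real.sin δ := Real.sin_pos_of_pos_of_lt_pi hδ0 (by linarith)
      set c0 : ℝ := ε * Real.sin δ / 12 with hc0def
      have hc0 : 0 < c0 := by positivity
      have hfreq : ∃ᶠ A : ℝ in atTop, d A < c0 :=
        frequently_lt_of_liminf_lt hdcobd (lt_of_le_of_lt hdle hc0)
      have hfreq2 : ∃ᶠ A : ℝ in atTop, I A ≤ ε := by
        apply (hfreq.and_eventually (eventually_ge_atTop (1:ℝ))).mono
        rintro A ⟨hdA, hA1⟩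
        have hA : (0:ℝ) < A := by linarith
        have h := vol_upper hω hA hδ0 hδπ
        have hVI := hfinIcc A
        have hne2 : ENNReal.ofReal (1 / (A * Real.sin δ)) *
            volume (ω ∩ Set.Icc (-A) A) ≠ ⊤ :=
          ENNReal.mul_ne_top ENNReal.ofReal_ne_top hVI
        have hne : ENNReal.ofReal (4 * δ) +
            3 * (ENNReal.ofReal (1 / (A * Real.sin δ)) * volume (ω ∩ Set.Icc (-A) A)) ≠ ⊤ := by
          apply ENNReal.add_ne_top.2
          exact ⟨ENNReal.ofReal_ne_top, ENNReal.mul_ne_top (by simp) hne2⟩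
        have h2 := ENNReal.toReal_mono hne h
        rw [ENNReal.toReal_add ENNReal.ofReal_ne_top (ENNReal.mul_ne_top (by simp) hne2),
          ENNReal.toReal_mul, ENNReal.toReal_mul, ENNReal.toReal_ofReal (by positivity),
          ENNReal.toReal_ofReal (by positivity)] at h2
        have h3 : (3:ENNReal).toReal = 3 := by simp
        rw [h3] at h2
        -- now h2 : I A ≤ 4δ + 3 * (1/(A sin δ) * VI.toReal)
        set V : ℝ := (volume (ω ∩ Set.Icc (-A) A)).toReal with hV
        have hVd : V = d A * (2 * A) := by
          rw [hd]; field_simp; exact hV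
        have hterm : 1 / (A * Real.sin δ) * V = 2 * d A / Real.sin δ := by
          rw [hVd]; field_simp
        rw [hterm] at h2
        have h4 : 4 * δ ≤ ε / 2 := by linarith
        have h5 : 3 * (2 * d A / Real.sin δ) < ε / 2 := by
          have he : 3 * (2 * d A / Real.sin δ) = 6 * d A / Real.sin δ := by ring
          have hdA' : d A < ε * Real.sin δ / 12 := hdA
          rw [he, div_lt_iff₀ hsδ]
          nlinarith
        linarith
      exact liminf_le_of_frequently_le hfreq2 hIbd
    have := hkey (liminf I atTop / 2) (by linarith)
    linarith
  · -- easy direction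
    intro hdpos
    have hmono : liminf d atTop ≤ liminf I atTop := by
      have hIub : ∀ A : ℝ, I A ≤ 2 * Real.pi := by
        intro A
        apply ENNReal.toReal_le_of_le_ofReal (by linarith)
        calc volume ((fun t => A * Real.sin t) ⁻¹' ω ∩ Set.Ioc 0 (2 * Real.pi))
            ≤ volume (Set.Ioc (0:ℝ) (2 * Real.pi)) := measure_mono Set.inter_subset_right
          _ ≤ ENNReal.ofReal (2 * Real.pi) := by
              rw [Real.volume_Ioc]
              exact ENNReal.ofReal_le_ofReal (by linarith)
      have hIcobd : IsCoboundedUnder (· ≥ ·) atTop I :=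
        IsBoundedUnder.isCoboundedUnder_ge
          ⟨2 * Real.pi, eventually_map.2 (Eventually.of_forall hIub)⟩
      have hdlb : IsBoundedUnder (· ≥ ·) atTop d := by
        refine ⟨0, eventually_map.2 ?_⟩
        filter_upwards [eventually_gt_atTop (0:ℝ)] with x hx
        exact div_nonneg ENNReal.toReal_nonneg (by linarith)
      apply liminf_le_liminf
      · filter_upwards [eventually_gt_atTop (0:ℝ)] with A hA
        exact hdI A hA
      · exact hdlb
      · exact hIcobd
    exact lt_of_lt_of_le hdpos hmono
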